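/- Let 𝓕 with norm ‖·‖ be as above, let 𝓕_{CEN} = {F ∈ 𝓕 : F(x) < 1/x for all x > 0}, and let 𝓕_{CEN1} = {F ∈ 𝓕_{CEN} : ∃ x_H > 0 with F(x_H) = 0 and F(x) < 0 for all x > x_H}. Then 𝓕_{CEN1} is open in 𝓕. -/

import Mathlib

def MemF (F : ℝ → ℝ) : Prop :=
  ContDiff ℝ 2 F ∧ F 0 = 1/2 ∧
  (∀ x ≥ (0:ℝ), deriv F x ≤ 0) ∧
  (∀ x ≥ (0:ℝ), deriv (deriv F) x ≥ 0) ∧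
  (∀ x ≥ (0:ℝ), x^2 * deriv (deriv F) x + 2*x*deriv F x - 2*F x + 1 ≥ 0) ∧
  (∀ x ≥ (0:ℝ), 2*x*deriv F x - 2*F x + 1 ≥ 0) ∧
  (∀ x ≥ (0:ℝ), -(x^2 * deriv (deriv F) x) + 2*x*deriv F x - 2*F x + 1 ≥ 0)

noncomputable def Fnorm (F : ℝ → ℝ) : ℝ :=
  sSup ((fun x => |F x|) '' Set.Ico (0:ℝ) 2) +
  sSup ((fun x => |F x / x|) '' Set.Ici (2:ℝ))

def NS1 (F : ℝ → ℝ) : Prop :=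
  ∃ x₀ > (0:ℝ), ∃ x₁ > x₀, F x₀ = 1/x₀ ∧ F x₁ > 1/x₁

def CEN (F : ℝ → ℝ) : Prop := ∀ x > (0:ℝ), F x < 1/x

def CEN1 (F : ℝ → ℝ) : Prop :=
  CEN F ∧ ∃ xH > (0:ℝ), F xH = 0 ∧ ∀ x > xH, F x < 0

open Set

lemma memF_antitone {H : ℝ → ℝ} (h : MemF H) : AntitoneOn H (Set.Ici 0) := by
  apply antitoneOn_of_deriv_nonpos (convex_Ici 0)
    (h.1.continuous.continuousOn)
    ((h.1.differentiable two_ne_zero).differentiableOn)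
  intro x hx
  rw [interior_Ici] at hx
  exact h.2.2.1 x (le_of_lt hx)

lemma memF_deriv_mono {H : ℝ → ℝ} (h : MemF H) : MonotoneOn (deriv H) (Set.Ici 0) := by
  have hd : ContDiff ℝ 1 (deriv H) := by
    have := (contDiff_succ_iff_deriv (n := 1)).mp (by norm_num at h ⊢; exact h.1)
    exact this.2.2
  apply monotoneOn_of_deriv_nonneg (convex_Ici 0)
    (hd.continuous.continuousOn)
    ((hd.differentiable one_ne_zero).differentiableOn)
  intro x hx
  rw [interior_Ici] at hx
  exact h.2.2.2.1 x (le_of_lt hx)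

lemma memF_upper {H : ℝ → ℝ} (h : MemF H) {x : ℝ} (hx : 0 ≤ x) : H x ≤ 1/2 := by
  have := memF_antitone h (self_mem_Ici) hx hx
  rw [h.2.1] at this
  exact this

lemma memF_lower {H : ℝ → ℝ} (h : MemF H) {x : ℝ} (hx : 2 ≤ x) :
    H 2 + deriv H 2 * (x - 2) ≤ H x := by
  rcases eq_or_lt_of_le hx with h2 | h2
  · rw [← h2]; ring_nf; simp
  · obtain ⟨c, hc, hceq⟩ := exists_deriv_eq_slope H h2
      (h.1.continuous.continuousOn)
      ((h.1.differentiable two_ne_zero).differentiableOn)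
    have hmono : deriv H 2 ≤ deriv H c :=
      memF_deriv_mono h (by norm_num) (Set.mem_Ici.mpr (by linarith [hc.1]))
        (le_of_lt hc.1)
    have : (H x - H 2) / (x - 2) ≥ deriv H 2 := by rw [← hceq]; exact hmono
    have hx2 : (0:ℝ) < x - 2 := by linarith
    have := (le_div_iff₀ hx2).mp this
    linarith

lemma memF_abs_div_le {H : ℝ → ℝ} (h : MemF H) {x : ℝ} (hx : 2 ≤ x) :
    |H x / x| ≤ (1/2 + |H 2|) / 2 + |deriv H 2| := by
  have hx0 : (0:ℝ) < x := by linarith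
  have h1 : H x ≤ 1/2 := memF_upper h (by linarith)
  have h2 : H 2 + deriv H 2 * (x - 2) ≤ H x := memF_lower h hx
  have hH2 : -|H 2| ≤ H 2 := neg_abs_le _
  have hm : -|deriv H 2| ≤ deriv H 2 := neg_abs_le _
  have hm' : deriv H 2 ≤ 0 := h.2.2.1 2 (by norm_num)
  have habs : |H x| ≤ 1/2 + |H 2| + |deriv H 2| * x := by
    rw [abs_le]
    constructor
    · have : deriv H 2 * (x - 2) ≥ -(|deriv H 2| * x) := by
        rw [abs_of_nonpos hm']; nlinarith
      nlinarith [abs_nonneg (H 2), abs_nonneg (deriv H 2)]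
    · nlinarith [abs_nonneg (H 2), abs_nonneg (deriv H 2)]
  rw [abs_div, abs_of_pos hx0, div_le_iff₀ hx0]
  nlinarith [abs_nonneg (H 2), abs_nonneg (deriv H 2)]

lemma diff_bddAbove1 {F G : ℝ → ℝ} (hF : MemF F) (hG : MemF G) :
    BddAbove ((fun x => |F x - G x|) '' Set.Ico (0:ℝ) 2) := by
  have hc : ContinuousOn (fun x => |F x - G x|) (Set.Icc (0:ℝ) 2) :=
    ((hF.1.continuous.sub hG.1.continuous).abs).continuousOn
  have := (isCompact_Icc (a := (0:ℝ)) (b := 2)).bddAbove_image hc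
  exact this.mono (Set.image_mono Set.Ico_subset_Icc_self)

lemma diff_bddAbove2 {F G : ℝ → ℝ} (hF : MemF F) (hG : MemF G) :
    BddAbove ((fun x => |(F x - G x) / x|) '' Set.Ici (2:ℝ)) := by
  refine ⟨((1/2 + |F 2|) / 2 + |deriv F 2|) + ((1/2 + |G 2|) / 2 + |deriv G 2|), ?_⟩
  rintro y ⟨x, hx, rfl⟩
  simp only [Set.mem_Ici] at hx
  have : |(F x - G x) / x| ≤ |F x / x| + |G x / x| := by
    rw [sub_div]; exact abs_sub _ _
  calc |(F x - G x) / x| ≤ |F x / x| + |G x / x| := this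
    _ ≤ _ := add_le_add (memF_abs_div_le hF hx) (memF_abs_div_le hG hx)

theorem stmt_10 (F : ℝ → ℝ) (hF : MemF F) (hC : CEN1 F) :
    ∃ ε > (0:ℝ), ∀ G : ℝ → ℝ, MemF G →
      Fnorm (fun x => F x - G x) < ε → CEN G := by
  obtain ⟨hCEN, xH, hxH, hFxH, hneg⟩ := hC
  set x₁ : ℝ := max 2 xH + 1 with hx₁def
  have hx₁2 : (2:ℝ) < x₁ := by
    have := le_max_left (2:ℝ) xH; simp only [hx₁def]; linarith
  have hx₁H : xH < x₁ := by
    have := le_max_right (2:ℝ) xH; simp only [hx₁def]; linarith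
  have hFx₁ : F x₁ < 0 := hneg x₁ hx₁H
  -- minimum of 1/x - F x on [2, x₁]
  have hcomp : IsCompact (Set.Icc (2:ℝ) x₁) := isCompact_Icc
  have hne : (Set.Icc (2:ℝ) x₁).Nonempty := ⟨2, by constructor <;> linarith⟩
  have hcont : ContinuousOn (fun x => 1/x - F x) (Set.Icc (2:ℝ) x₁) := by
    apply ContinuousOn.sub
    · apply ContinuousOn.div continuousOn_const continuousOn_id
      intro x hx; have := hx.1; positivity
    · exact hF.1.continuous.continuousOn
  obtain ⟨c, hc, hcmin⟩ := hcomp.exists_isMinOn hne hcont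
  set l : ℝ := 1/c - F c with hldef
  have hc0 : (0:ℝ) < c := by linarith [hc.1]
  have hl : 0 < l := by
    have := hCEN c hc0; simp only [hldef]; linarith
  have hlmin : ∀ x ∈ Set.Icc (2:ℝ) x₁, l ≤ 1/x - F x := fun x hx => hcmin hx
  refine ⟨min (l / x₁) (-F x₁ / x₁), ?_, ?_⟩
  · exact lt_min (by positivity) (div_pos (by linarith) (by linarith))
  intro G hG hclose
  -- extract pointwise bounds on [2, ∞)
  have hS1nonneg : 0 ≤ sSup ((fun x => |F x - G x|) '' Set.Ico (0:ℝ) 2) := by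
    apply le_csSup_of_le (diff_bddAbove1 hF hG) ⟨0, by norm_num, rfl⟩ (abs_nonneg _)
  have hkey : ∀ x ≥ (2:ℝ), |(F x - G x) / x| < min (l / x₁) (-F x₁ / x₁) := by
    intro x hx
    have hle : |(F x - G x) / x| ≤ sSup ((fun x => |(F x - G x) / x|) '' Set.Ici (2:ℝ)) :=
      le_csSup (diff_bddAbove2 hF hG) ⟨x, hx, rfl⟩
    have : Fnorm (fun x => F x - G x) ≥ sSup ((fun x => |(F x - G x) / x|) '' Set.Ici (2:ℝ)) := by
      unfold Fnorm; linarith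
    linarith
  -- pointwise: for x ≥ 2, G x < F x + ε x with ε = min ...
  have hpt : ∀ x ≥ (2:ℝ), G x < F x + min (l / x₁) (-F x₁ / x₁) * x := by
    intro x hx
    have hx0 : (0:ℝ) < x := by linarith
    have h1 := hkey x hx
    have h2 : -((F x - G x) / x) ≤ |(F x - G x) / x| := neg_le_abs _
    have : (G x - F x) / x < min (l / x₁) (-F x₁ / x₁) := by
      have : -((F x - G x) / x) = (G x - F x) / x := by ring
      linarith
    nlinarith [(div_lt_iff₀ hx0).mp this]
  intro x hx0
  rcases lt_or_ge x 2 with hx2 | hx2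
  · -- x < 2 : G x ≤ 1/2 < 1/x
    have h1 : G x ≤ 1/2 := memF_upper hG (le_of_lt hx0)
    have h2 : 1/2 < 1/x := by
      rw [div_lt_div_iff₀ (by norm_num) hx0]; linarith
    linarith
  rcases le_or_gt x x₁ with hxx₁ | hxx₁
  · -- 2 ≤ x ≤ x₁
    have hmin : min (l / x₁) (-F x₁ / x₁) ≤ l / x₁ := min_le_left _ _
    have h1 := hpt x hx2
    have h2 : min (l / x₁) (-F x₁ / x₁) * x ≤ l := by
      have hminpos : 0 < min (l / x₁) (-F x₁ / x₁) := lt_min (by positivity) (div_pos (by linarith) (by linarith))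
      calc min (l / x₁) (-F x₁ / x₁) * x ≤ (l / x₁) * x₁ := by
            apply mul_le_mul hmin hxx₁ (by linarith) (by positivity)
        _ = l := by field_simp
    have h3 := hlmin x ⟨hx2, hxx₁⟩
    linarith
  · -- x > x₁ : G x ≤ G x₁ < 0 < 1/x
    have h1 : G x ≤ G x₁ := memF_antitone hG (Set.mem_Ici.mpr (by linarith))
      (Set.mem_Ici.mpr (by linarith)) (le_of_lt hxx₁)
    have h2 := hpt x₁ (le_of_lt hx₁2)
    have h3 : min (l / x₁) (-F x₁ / x₁) ≤ -F x₁ / x₁ := min_le_right _ _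
    have hx₁0 : (0:ℝ) < x₁ := by linarith
    have h4 : min (l / x₁) (-F x₁ / x₁) * x₁ ≤ -F x₁ := by
      calc min (l / x₁) (-F x₁ / x₁) * x₁ ≤ (-F x₁ / x₁) * x₁ :=
            mul_le_mul_of_nonneg_right h3 (le_of_lt hx₁0)
        _ = -F x₁ := by field_simp
    have h5 : G x₁ < 0 := by linarith
    have h6 : 0 < 1/x := by positivity
    linarith
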